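/- Let 𝕂 be ℝ or ℂ and let r = (r_1,…,r_n) be a vector of positive reals. For every F ∈ 𝕂^{d×n}, the gradient of the total frame energy Φ_r with respect to the real Frobenius inner product is ∇Φ_r(F) = F·(4 F* F + diag(‖f_1‖²/r_1² − 1/r_1 − 4, …, ‖f_n‖²/r_n² − 1/r_n − 4)). -/

import Mathlib

open scoped BigOperators Matrix

attribute [local instance] Matrix.normedAddCommGroup Matrix.normedSpace

/-- The total frame energy. -/
noncomputable def totalFrameEnergy {d n : ℕ} {𝕂 : Type*} [RCLike 𝕂]
    (r : Fin n → ℝ) (F : Matrix (Fin d) (Fin n) 𝕂) : ℝ :=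
  (∑ i, ∑ j, ‖(F * Fᴴ - 1 : Matrix (Fin d) (Fin d) 𝕂) i j‖ ^ 2) +
    (1 / 4) * ∑ i, ((∑ j, ‖F j i‖ ^ 2) / r i - 1) ^ 2

/-- The real Frobenius inner product `⟨X, Y⟩ = Re tr (Xᴴ Y)`, written entrywise. -/
noncomputable def frobInner {d n : ℕ} {𝕂 : Type*} [RCLike 𝕂]
    (X Y : Matrix (Fin d) (Fin n) 𝕂) : ℝ :=
  ∑ i, ∑ j, RCLike.re ((starRingEnd 𝕂) (X i j) * Y i j)

/-- `G` is the gradient of `Φ` at `F` with respect to the real Frobenius inner product: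
`Φ` is differentiable at `F` and its derivative is pairing with `G`. -/
noncomputable def IsFrobGradientAt {d n : ℕ} {𝕂 : Type*} [RCLike 𝕂]
    (Φ : Matrix (Fin d) (Fin n) 𝕂 → ℝ) (G F : Matrix (Fin d) (Fin n) 𝕂) : Prop :=
  DifferentiableAt ℝ Φ F ∧ ∀ X, fderiv ℝ Φ F X = frobInner G X

section Aux

variable {d n : ℕ} {𝕂 : Type*} [RCLike 𝕂]

open RCLike

noncomputable def myE (i : Fin d) (j : Fin n) : Matrix (Fin d) (Fin n) 𝕂 →L[ℝ] 𝕂 :=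
  (ContinuousLinearMap.proj j).comp
    (ContinuousLinearMap.proj (R := ℝ) (φ := fun _ : Fin d => Fin n → 𝕂) i)

@[simp] lemma myE_apply (i : Fin d) (j : Fin n) (M : Matrix (Fin d) (Fin n) 𝕂) :
    myE i j M = M i j := rfl

noncomputable def myC (i : Fin d) (j : Fin n) : Matrix (Fin d) (Fin n) 𝕂 →L[ℝ] 𝕂 :=
  ((RCLike.conjCLE (K := 𝕂)).toContinuousLinearMap).comp (myE i j)

@[simp] lemma myC_apply (i : Fin d) (j : Fin n) (M : Matrix (Fin d) (Fin n) 𝕂) :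
    myC i j M = (starRingEnd 𝕂) (M i j) := rfl

lemma hasFDerivAt_myE (i : Fin d) (j : Fin n) (F : Matrix (Fin d) (Fin n) 𝕂) :
    HasFDerivAt (fun M : Matrix (Fin d) (Fin n) 𝕂 => M i j) (myE i j) F := by
  exact (myE (𝕂 := 𝕂) i j).hasFDerivAt (x := F)

lemma hasFDerivAt_myC (i : Fin d) (j : Fin n) (F : Matrix (Fin d) (Fin n) 𝕂) :
    HasFDerivAt (fun M : Matrix (Fin d) (Fin n) 𝕂 => (starRingEnd 𝕂) (M i j)) (myC i j) F := by
  exact (myC (𝕂 := 𝕂) i j).hasFDerivAt (x := F)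

-- pointwise identity: re a * re b + im a * im b = re (conj a * b)
lemma re_conj_mul (a b : 𝕂) :
    re a * re b + im a * im b = re ((starRingEnd 𝕂) a * b) := by
  simp [RCLike.mul_re]

-- Part 1 canonicalization
lemma part1_eq (F X : Matrix (Fin d) (Fin n) 𝕂) :
    (∑ i : Fin d, ∑ j : Fin d, 2 * re ((starRingEnd 𝕂)
        ((∑ k, F i k * (starRingEnd 𝕂) (F j k)) - (1 : Matrix (Fin d) (Fin d) 𝕂) i j) *
        ∑ k, (F i k * (starRingEnd 𝕂) (X j k) + (starRingEnd 𝕂) (F j k) * X i k)))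
    = (∑ i : Fin d, ∑ k : Fin n, ∑ j : Fin d, ∑ l : Fin n,
        4 * re ((starRingEnd 𝕂) (F i l) * F j l * (starRingEnd 𝕂) (F j k) * X i k))
      - ∑ i : Fin d, ∑ k : Fin n, 4 * re ((starRingEnd 𝕂) (F i k) * X i k) := by
  have flip : ∀ z u v : 𝕂, re ((starRingEnd 𝕂) z * (u * (starRingEnd 𝕂) v))
      = re (z * ((starRingEnd 𝕂) u * v)) := by
    intro z u v
    rw [← RCLike.conj_re (z * ((starRingEnd 𝕂) u * v))]
    simp [map_mul]
  have flip2 : ∀ z u v : 𝕂, re (z * (u * (starRingEnd 𝕂) v))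
      = re ((starRingEnd 𝕂) z * ((starRingEnd 𝕂) u * v)) := by
    intro z u v
    rw [← RCLike.conj_re (z * (u * (starRingEnd 𝕂) v))]
    simp [map_mul]
  have haconj : ∀ i j : Fin d, (starRingEnd 𝕂)
      ((∑ k, F i k * (starRingEnd 𝕂) (F j k)) - (1 : Matrix (Fin d) (Fin d) 𝕂) i j)
      = (∑ k, F j k * (starRingEnd 𝕂) (F i k)) - (1 : Matrix (Fin d) (Fin d) 𝕂) j i := by
    intro i j
    simp [map_sub, map_sum, map_mul, Matrix.one_apply, apply_ite (starRingEnd 𝕂), eq_comm,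
      mul_comm]
  simp only [Finset.mul_sum, mul_add, map_add, map_sum, Finset.sum_add_distrib]
  simp only [haconj]
  simp only [flip2]
  simp only [haconj]
  rw [show (∑ x : Fin d, ∑ x1 : Fin d, ∑ i : Fin n, 2 *
      re (((∑ k, F x k * (starRingEnd 𝕂) (F x1 k)) - (1 : Matrix (Fin d) (Fin d) 𝕂) x x1) *
        ((starRingEnd 𝕂) (F x i) * X x1 i)))
    = ∑ x : Fin d, ∑ x1 : Fin d, ∑ i : Fin n, 2 *
      re (((∑ k, F x1 k * (starRingEnd 𝕂) (F x k)) - (1 : Matrix (Fin d) (Fin d) 𝕂) x1 x) *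
        ((starRingEnd 𝕂) (F x1 i) * X x i)) from Finset.sum_comm]
  rw [← Finset.sum_add_distrib]
  simp only [← Finset.sum_add_distrib]
  have hpoint : ∀ (x x1 : Fin d) (x2 : Fin n),
      2 * re (((∑ k, F x1 k * (starRingEnd 𝕂) (F x k)) - (1 : Matrix (Fin d) (Fin d) 𝕂) x1 x) *
        ((starRingEnd 𝕂) (F x1 x2) * X x x2)) +
      2 * re (((∑ k, F x1 k * (starRingEnd 𝕂) (F x k)) - (1 : Matrix (Fin d) (Fin d) 𝕂) x1 x) *
        ((starRingEnd 𝕂) (F x1 x2) * X x x2))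
      = (∑ l, 4 * re (F x1 l * (starRingEnd 𝕂) (F x l) * ((starRingEnd 𝕂) (F x1 x2) * X x x2)))
        - 4 * re ((1 : Matrix (Fin d) (Fin d) 𝕂) x1 x * ((starRingEnd 𝕂) (F x1 x2) * X x x2)) := by
    intro x x1 x2
    simp only [sub_mul, Finset.sum_mul, map_sub, map_sum]
    rw [show (∑ l, 4 * re (F x1 l * (starRingEnd 𝕂) (F x l) * ((starRingEnd 𝕂) (F x1 x2) * X x x2)))
      = 4 * ∑ l, re (F x1 l * (starRingEnd 𝕂) (F x l) * ((starRingEnd 𝕂) (F x1 x2) * X x x2)) from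
      (Finset.mul_sum _ _ _).symm]
    ring
  simp only [hpoint]
  simp only [Finset.sum_sub_distrib]
  congr 1
  · refine Finset.sum_congr rfl fun x _ => ?_
    rw [Finset.sum_comm]
    refine Finset.sum_congr rfl fun k _ => Finset.sum_congr rfl fun j _ =>
      Finset.sum_congr rfl fun l _ => ?_
    congr 1
    ring
  · refine Finset.sum_congr rfl fun x _ => ?_
    rw [Finset.sum_comm]
    simp only [Matrix.one_apply, ite_mul, one_mul, zero_mul, apply_ite (RCLike.re (K := 𝕂)),
      map_zero, mul_ite, mul_zero, Finset.sum_ite_eq', Finset.mem_univ, if_true]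

lemma rhs_eq (r : Fin n → ℝ) (F X : Matrix (Fin d) (Fin n) 𝕂) :
    frobInner (F * ((4 : ℕ) • (Fᴴ * F) +
        Matrix.diagonal fun i =>
          algebraMap ℝ 𝕂 ((∑ j, ‖F j i‖ ^ 2) / r i ^ 2 - 1 / r i - 4))) X
    = (∑ i : Fin d, ∑ k : Fin n, ∑ j : Fin d, ∑ l : Fin n,
        4 * re ((starRingEnd 𝕂) (F i l) * F j l * (starRingEnd 𝕂) (F j k) * X i k))
      + ∑ i : Fin d, ∑ k : Fin n,
          ((∑ j, ‖F j k‖ ^ 2) / r k ^ 2 - 1 / r k - 4) * re ((starRingEnd 𝕂) (F i k) * X i k) := by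
  unfold frobInner
  simp only [Matrix.mul_apply, Matrix.add_apply, Matrix.smul_apply, Matrix.diagonal_apply,
    Matrix.conjTranspose_apply, map_sum, map_add, map_mul, map_nsmul, apply_ite (starRingEnd 𝕂),
    map_zero, RCLike.algebraMap_eq_ofReal, RCLike.conj_ofReal]
  have hre3 : ∀ (c : ℝ) (a b : 𝕂), re (a * (c : 𝕂) * b) = c * re (a * b) := by
    intro c a b
    rw [show a * (c : 𝕂) * b = (c : 𝕂) * (a * b) from by ring, RCLike.re_ofReal_mul]
  simp only [RCLike.star_def, RCLike.conj_conj]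
  simp only [mul_add, Finset.sum_add_distrib, add_mul, map_add, Finset.sum_mul, map_sum]
  congr 1
  · refine Finset.sum_congr rfl fun x _ => Finset.sum_congr rfl fun x1 _ => ?_
    simp only [smul_mul_assoc, mul_smul_comm, Finset.mul_sum, Finset.sum_mul, map_nsmul,
      map_sum, nsmul_eq_mul, Nat.cast_ofNat]
    rw [Finset.sum_comm]
    refine Finset.sum_congr rfl fun x3 _ => Finset.sum_congr rfl fun x2 _ => ?_
    rw [show ((starRingEnd 𝕂) (F x x2) * (4 * (F x3 x2 * (starRingEnd 𝕂) (F x3 x1))) * X x x1 : 𝕂)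
      = ((4:ℝ) : 𝕂) * ((starRingEnd 𝕂) (F x x2) * F x3 x2 * (starRingEnd 𝕂) (F x3 x1) * X x x1)
      from by push_cast; ring, RCLike.re_ofReal_mul]
  · refine Finset.sum_congr rfl fun x _ => Finset.sum_congr rfl fun x1 _ => ?_
    simp only [mul_ite, mul_zero, ite_mul, zero_mul, apply_ite (RCLike.re (K := 𝕂)), map_zero,
      Finset.sum_ite_eq', Finset.mem_univ, if_true]
    rw [hre3]

lemma frame_key (r : Fin n → ℝ) (F X : Matrix (Fin d) (Fin n) 𝕂) :
    (∑ i : Fin d, ∑ j : Fin d, 2 * re ((starRingEnd 𝕂)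
        ((∑ k, F i k * (starRingEnd 𝕂) (F j k)) - (1 : Matrix (Fin d) (Fin d) 𝕂) i j) *
        ∑ k, (F i k * (starRingEnd 𝕂) (X j k) + (starRingEnd 𝕂) (F j k) * X i k))) +
      1/4 * ∑ k : Fin n, 2 * ((r k)⁻¹ *
          (∑ j : Fin d, (re (F j k) * re (F j k) + im (F j k) * im (F j k))) - 1) *
        ((r k)⁻¹ * ∑ j : Fin d, 2 * re ((starRingEnd 𝕂) (F j k) * X j k))
    = frobInner (F * ((4 : ℕ) • (Fᴴ * F) +
        Matrix.diagonal fun i =>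
          algebraMap ℝ 𝕂 ((∑ j, ‖F j i‖ ^ 2) / r i ^ 2 - 1 / r i - 4))) X := by
  rw [part1_eq, rhs_eq]
  have hs : ∀ k : Fin n, (∑ j : Fin d, ‖F j k‖ ^ 2)
      = ∑ j : Fin d, (re (F j k) * re (F j k) + im (F j k) * im (F j k)) :=
    fun k => Finset.sum_congr rfl fun j _ => by
      rw [← RCLike.normSq_eq_def', RCLike.normSq_apply]
  have hP2 : 1/4 * ∑ k : Fin n, 2 * ((r k)⁻¹ *
          (∑ j : Fin d, (re (F j k) * re (F j k) + im (F j k) * im (F j k))) - 1) *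
        ((r k)⁻¹ * ∑ j : Fin d, 2 * re ((starRingEnd 𝕂) (F j k) * X j k))
      = ∑ i : Fin d, ∑ k : Fin n,
          ((∑ j, ‖F j k‖ ^ 2) / r k ^ 2 - 1 / r k) * re ((starRingEnd 𝕂) (F i k) * X i k) := by
    rw [Finset.sum_comm]
    rw [Finset.mul_sum]
    refine Finset.sum_congr rfl fun k _ => ?_
    rw [show (r k)⁻¹ * ∑ j : Fin d, 2 * re ((starRingEnd 𝕂) (F j k) * X j k)
      = ∑ j : Fin d, (r k)⁻¹ * (2 * re ((starRingEnd 𝕂) (F j k) * X j k)) from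
      Finset.mul_sum _ _ _]
    rw [Finset.mul_sum, Finset.mul_sum]
    refine Finset.sum_congr rfl fun j _ => ?_
    rw [hs k]
    ring
  rw [hP2]
  have hDiag : (∑ i : Fin d, ∑ k : Fin n,
        ((∑ j, ‖F j k‖ ^ 2) / r k ^ 2 - 1 / r k - 4) * re ((starRingEnd 𝕂) (F i k) * X i k))
      = (∑ i : Fin d, ∑ k : Fin n,
          ((∑ j, ‖F j k‖ ^ 2) / r k ^ 2 - 1 / r k) * re ((starRingEnd 𝕂) (F i k) * X i k))
        - ∑ i : Fin d, ∑ k : Fin n, 4 * re ((starRingEnd 𝕂) (F i k) * X i k) := by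
    simp only [← Finset.sum_sub_distrib]
    refine Finset.sum_congr rfl fun i _ => Finset.sum_congr rfl fun k _ => ?_
    ring
  rw [hDiag]
  ring

end Aux

/-- the gradient of the total frame energy is
`∇Φ_r(F) = F (4 Fᴴ F + diag(‖fᵢ‖²/rᵢ² − 1/rᵢ − 4))`. -/
theorem stmt_2 (d n : ℕ) (hd : 1 ≤ d) (hdn : d ≤ n) (𝕂 : Type*) [RCLike 𝕂]
    (r : Fin n → ℝ) (hr : ∀ i, 0 < r i) (F : Matrix (Fin d) (Fin n) 𝕂) :
    IsFrobGradientAt (totalFrameEnergy r)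
      (F * ((4 : ℕ) • (Fᴴ * F) +
        Matrix.diagonal fun i =>
          algebraMap ℝ 𝕂 ((∑ j, ‖F j i‖ ^ 2) / r i ^ 2 - 1 / r i - 4))) F := by
  classical
  open RCLike in
  -- step 1: entry of M Mᴴ - 1
  have hstep1 : ∀ (i j : Fin d), ∃ L : Matrix (Fin d) (Fin n) 𝕂 →L[ℝ] 𝕂,
      HasFDerivAt (fun M : Matrix (Fin d) (Fin n) 𝕂 =>
        (∑ k, M i k * (starRingEnd 𝕂) (M j k)) - (1 : Matrix (Fin d) (Fin d) 𝕂) i j) L F ∧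
      ∀ X, L X = ∑ k, (F i k * (starRingEnd 𝕂) (X j k) + (starRingEnd 𝕂) (F j k) * X i k) := by
    intro i j
    refine ⟨_, (HasFDerivAt.fun_sum fun k _ =>
      (hasFDerivAt_myE i k F).fun_mul (hasFDerivAt_myC j k F)).sub_const _, fun X => ?_⟩
    show (∑ k, (F i k • myC j k + (starRingEnd 𝕂) (F j k) • myE i k) :
      Matrix (Fin d) (Fin n) 𝕂 →L[ℝ] 𝕂) X = _
    simp [ContinuousLinearMap.sum_apply, smul_eq_mul]
    exact Finset.sum_congr rfl fun k _ => rfl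
  -- step 2: squared modulus of an entry of M Mᴴ - 1
  have hstep2 : ∀ (i j : Fin d), ∃ L : Matrix (Fin d) (Fin n) 𝕂 →L[ℝ] ℝ,
      HasFDerivAt (fun M : Matrix (Fin d) (Fin n) 𝕂 =>
        re ((∑ k, M i k * (starRingEnd 𝕂) (M j k)) - (1 : Matrix (Fin d) (Fin d) 𝕂) i j) *
          re ((∑ k, M i k * (starRingEnd 𝕂) (M j k)) - (1 : Matrix (Fin d) (Fin d) 𝕂) i j) +
        im ((∑ k, M i k * (starRingEnd 𝕂) (M j k)) - (1 : Matrix (Fin d) (Fin d) 𝕂) i j) *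
          im ((∑ k, M i k * (starRingEnd 𝕂) (M j k)) - (1 : Matrix (Fin d) (Fin d) 𝕂) i j)) L F ∧
      ∀ X, L X = 2 * re ((starRingEnd 𝕂)
          ((∑ k, F i k * (starRingEnd 𝕂) (F j k)) - (1 : Matrix (Fin d) (Fin d) 𝕂) i j) *
          (∑ k, (F i k * (starRingEnd 𝕂) (X j k) + (starRingEnd 𝕂) (F j k) * X i k))) := by
    intro i j
    obtain ⟨L1, hL1, hL1app⟩ := hstep1 i j
    refine ⟨_, ((((RCLike.reCLM (K := 𝕂)).hasFDerivAt.comp F hL1).fun_mul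
      ((RCLike.reCLM (K := 𝕂)).hasFDerivAt.comp F hL1)).fun_add
      ((((RCLike.imCLM (K := 𝕂)).hasFDerivAt.comp F hL1).fun_mul
      ((RCLike.imCLM (K := 𝕂)).hasFDerivAt.comp F hL1)))), fun X => ?_⟩
    show re ((∑ k, F i k * (starRingEnd 𝕂) (F j k)) - (1 : Matrix (Fin d) (Fin d) 𝕂) i j) * re (L1 X) + re ((∑ k, F i k * (starRingEnd 𝕂) (F j k)) - (1 : Matrix (Fin d) (Fin d) 𝕂) i j) * re (L1 X) +
      (im ((∑ k, F i k * (starRingEnd 𝕂) (F j k)) - (1 : Matrix (Fin d) (Fin d) 𝕂) i j) * im (L1 X) + im ((∑ k, F i k * (starRingEnd 𝕂) (F j k)) - (1 : Matrix (Fin d) (Fin d) 𝕂) i j) * im (L1 X)) = _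
    simp only [ContinuousLinearMap.add_apply, ContinuousLinearMap.smul_apply,
      ContinuousLinearMap.comp_apply, RCLike.reCLM_apply, RCLike.imCLM_apply,
      smul_eq_mul, hL1app, Function.comp_apply]
    rw [← re_conj_mul]
    ring
  choose L2 hL2 hL2app using hstep2
  -- part 1 : sum over i j
  have hP1 : HasFDerivAt (fun M : Matrix (Fin d) (Fin n) 𝕂 =>
      ∑ i, ∑ j, (re ((∑ k, M i k * (starRingEnd 𝕂) (M j k)) - (1 : Matrix (Fin d) (Fin d) 𝕂) i j) *
          re ((∑ k, M i k * (starRingEnd 𝕂) (M j k)) - (1 : Matrix (Fin d) (Fin d) 𝕂) i j) +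
        im ((∑ k, M i k * (starRingEnd 𝕂) (M j k)) - (1 : Matrix (Fin d) (Fin d) 𝕂) i j) *
          im ((∑ k, M i k * (starRingEnd 𝕂) (M j k)) - (1 : Matrix (Fin d) (Fin d) 𝕂) i j)))
      (∑ i, ∑ j, L2 i j) F :=
    HasFDerivAt.fun_sum fun i _ => HasFDerivAt.fun_sum fun j _ => hL2 i j
  -- step 4 : column norm-squared sums
  have hstep4 : ∀ (k : Fin n), ∃ L : Matrix (Fin d) (Fin n) 𝕂 →L[ℝ] ℝ,
      HasFDerivAt (fun M : Matrix (Fin d) (Fin n) 𝕂 =>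
        ∑ j, (re (M j k) * re (M j k) + im (M j k) * im (M j k))) L F ∧
      ∀ X, L X = ∑ j, 2 * re ((starRingEnd 𝕂) (F j k) * X j k) := by
    intro k
    refine ⟨_, HasFDerivAt.fun_sum (fun j _ =>
      ((((RCLike.reCLM (K := 𝕂)).hasFDerivAt.comp F (hasFDerivAt_myE j k F)).fun_mul
        ((RCLike.reCLM (K := 𝕂)).hasFDerivAt.comp F (hasFDerivAt_myE j k F))).fun_add
       (((RCLike.imCLM (K := 𝕂)).hasFDerivAt.comp F (hasFDerivAt_myE j k F)).fun_mul
        ((RCLike.imCLM (K := 𝕂)).hasFDerivAt.comp F (hasFDerivAt_myE j k F))))), fun X => ?_⟩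
    show (∑ j, (re (F j k) • (RCLike.reCLM (K := 𝕂)).comp (myE j k) +
      re (F j k) • (RCLike.reCLM (K := 𝕂)).comp (myE j k) +
      (im (F j k) • (RCLike.imCLM (K := 𝕂)).comp (myE j k) +
      im (F j k) • (RCLike.imCLM (K := 𝕂)).comp (myE j k)))) X = _
    simp only [ContinuousLinearMap.sum_apply, ContinuousLinearMap.add_apply,
      ContinuousLinearMap.smul_apply, ContinuousLinearMap.comp_apply, RCLike.reCLM_apply,
      RCLike.imCLM_apply, smul_eq_mul, Function.comp_apply, myE_apply]
    refine Finset.sum_congr rfl fun j _ => ?_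
    rw [← re_conj_mul]
    ring
  choose L4 hL4 hL4app using hstep4
  -- step 5 : the penalty summand
  have hstep5 : ∀ (k : Fin n), ∃ L : Matrix (Fin d) (Fin n) 𝕂 →L[ℝ] ℝ,
      HasFDerivAt (fun M : Matrix (Fin d) (Fin n) 𝕂 =>
        ((r k)⁻¹ * ∑ j, (re (M j k) * re (M j k) + im (M j k) * im (M j k)) - 1) *
        ((r k)⁻¹ * ∑ j, (re (M j k) * re (M j k) + im (M j k) * im (M j k)) - 1)) L F ∧
      ∀ X, L X = 2 * ((r k)⁻¹ * (∑ j, (re (F j k) * re (F j k) + im (F j k) * im (F j k))) - 1) *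
        ((r k)⁻¹ * ∑ j, 2 * re ((starRingEnd 𝕂) (F j k) * X j k)) := by
    intro k
    have h1 : HasFDerivAt (fun M : Matrix (Fin d) (Fin n) 𝕂 =>
        (r k)⁻¹ * ∑ j, (re (M j k) * re (M j k) + im (M j k) * im (M j k)) - 1)
        ((r k)⁻¹ • L4 k) F := ((hL4 k).const_mul _).sub_const _
    refine ⟨_, h1.fun_mul h1, fun X => ?_⟩
    show ((r k)⁻¹ * ∑ j, (re (F j k) * re (F j k) + im (F j k) * im (F j k)) - 1) * ((r k)⁻¹ * L4 k X) + ((r k)⁻¹ * ∑ j, (re (F j k) * re (F j k) + im (F j k) * im (F j k)) - 1) * ((r k)⁻¹ * L4 k X) = _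
    simp only [ContinuousLinearMap.add_apply, ContinuousLinearMap.smul_apply, smul_eq_mul,
      hL4app]
    ring
  choose L5 hL5 hL5app using hstep5
  have hP2 : HasFDerivAt (fun M : Matrix (Fin d) (Fin n) 𝕂 =>
      (1/4 : ℝ) * ∑ k, (((r k)⁻¹ * ∑ j, (re (M j k) * re (M j k) + im (M j k) * im (M j k)) - 1) *
        ((r k)⁻¹ * ∑ j, (re (M j k) * re (M j k) + im (M j k) * im (M j k)) - 1)))
      ((1/4 : ℝ) • ∑ k, L5 k) F :=
    (HasFDerivAt.fun_sum fun k _ => hL5 k).const_mul _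
  have Htot := hP1.fun_add hP2
  -- rewrite totalFrameEnergy as the function above
  have hfun : totalFrameEnergy (𝕂 := 𝕂) (d := d) r = fun M : Matrix (Fin d) (Fin n) 𝕂 =>
      (∑ i, ∑ j, (re ((∑ k, M i k * (starRingEnd 𝕂) (M j k)) - (1 : Matrix (Fin d) (Fin d) 𝕂) i j) *
          re ((∑ k, M i k * (starRingEnd 𝕂) (M j k)) - (1 : Matrix (Fin d) (Fin d) 𝕂) i j) +
        im ((∑ k, M i k * (starRingEnd 𝕂) (M j k)) - (1 : Matrix (Fin d) (Fin d) 𝕂) i j) *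
          im ((∑ k, M i k * (starRingEnd 𝕂) (M j k)) - (1 : Matrix (Fin d) (Fin d) 𝕂) i j))) +
      (1/4 : ℝ) * ∑ k, (((r k)⁻¹ * ∑ j, (re (M j k) * re (M j k) + im (M j k) * im (M j k)) - 1) *
        ((r k)⁻¹ * ∑ j, (re (M j k) * re (M j k) + im (M j k) * im (M j k)) - 1)) := by
    funext M
    unfold totalFrameEnergy
    congr 1
    · refine Finset.sum_congr rfl fun i _ => Finset.sum_congr rfl fun j _ => ?_
      rw [← RCLike.normSq_eq_def', RCLike.normSq_apply]
      congr 2 <;> simp [Matrix.sub_apply, Matrix.mul_apply, Matrix.conjTranspose_apply]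
    · congr 1
      refine Finset.sum_congr rfl fun k _ => ?_
      have : (∑ j, ‖M j k‖ ^ 2) / r k - 1
          = (r k)⁻¹ * ∑ j, (re (M j k) * re (M j k) + im (M j k) * im (M j k)) - 1 := by
        rw [div_eq_inv_mul]
        congr 2
        refine Finset.sum_congr rfl fun j _ => ?_
        rw [← RCLike.normSq_eq_def', RCLike.normSq_apply]
      rw [this, sq]
    done
  rw [hfun]
  refine ⟨Htot.differentiableAt, fun X => ?_⟩
  refine (congrArg (fun L => L X) Htot.fderiv).trans ?_
  have e : (∑ i, ∑ j, L2 i j + (1/4 : ℝ) • ∑ k, L5 k) X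
      = ∑ i, ∑ j, L2 i j X + (1/4 : ℝ) * ∑ k, L5 k X := by
    simp only [ContinuousLinearMap.add_apply, ContinuousLinearMap.sum_apply,
      ContinuousLinearMap.smul_apply, smul_eq_mul]
  refine e.trans ?_
  simp only [hL2app, hL5app]
  exact frame_key r F X
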